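/- Let D ≥ 1 and let w ∈ ℝ^D be a weight vector with strictly decreasing positive components w₁ > w₂ > … > w_D > 0. Then the generalized Gini social welfare function satisfies the Pigou–Dalton transfer principle: for every v ∈ ℝ^D and indices i, j with v_i > v_j, and for every ε with 0 < ε < v_i − v_j, one has GGF_w(v − ε·e_i + ε·e_j) > GGF_w(v), where e_k denotes the k-th canonical basis vector of ℝ^D. -/

import Mathlib

open Finset

/-- Generalized Gini social welfare function: weighted sum of the components of `v`
sorted in increasing order. -/
noncomputable def GGF {D : ℕ} (w v : Fin D → ℝ) : ℝ :=
  ∑ i, w i * v (Tuple.sort v i)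

/-- for strictly decreasing positive weights, GGF satisfies the
Pigou–Dalton transfer principle: transferring ε from a better-off component i to a
worse-off component j (with 0 < ε < v i - v j) strictly increases the welfare. -/
theorem ggf_pigou_dalton {D : ℕ} (hD : 1 ≤ D) (w : Fin D → ℝ)
    (hw : StrictAnti w) (hwpos : ∀ i, 0 < w i)
    (v : Fin D → ℝ) (i j : Fin D) (hij : v j < v i)
    (ε : ℝ) (hε0 : 0 < ε) (hεlt : ε < v i - v j) :
    GGF w v < GGF w (fun k => v k - (if k = i then ε else 0) + (if k = j then ε else 0)) := by
  set v' : Fin D → ℝ := fun k => v k - (if k = i then ε else 0) + (if k = j then ε else 0)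
    with hv'
  have hne : i ≠ j := by rintro rfl; exact lt_irrefl _ hij
  set σ : Equiv.Perm (Fin D) := Tuple.sort v' with hσ
  -- GGF w v is the minimum over permutations
  have key : ∀ π : Equiv.Perm (Fin D), GGF w v ≤ ∑ k, w k * v (π k) := by
    intro π
    have hant : Antivary w (v ∘ Tuple.sort v) :=
      hw.antitone.antivary (Tuple.monotone_sort v)
    have := hant.sum_mul_le_sum_mul_comp_perm (σ := π.trans (Tuple.sort v).symm)
    simpa [GGF, Function.comp] using this
  have hG' : GGF w v' = ∑ m, w (σ.symm m) * v' m := by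
    rw [GGF, ← Equiv.sum_comp σ (fun m => w (σ.symm m) * v' m)]
    simp
    rfl
  have hS : ∀ π : Equiv.Perm (Fin D),
      ∑ k, w k * v (π k) = ∑ m, w ((π.symm) m) * v m := by
    intro π
    rw [← Equiv.sum_comp π (fun m => w (π.symm m) * v m)]
    simp
  -- difference against π = σ
  have hΔ1 : GGF w v' - ∑ k, w k * v (σ k)
      = ε * (w (σ.symm j) - w (σ.symm i)) := by
    rw [hG', hS σ, ← Finset.sum_sub_distrib]
    have : ∀ m, w (σ.symm m) * v' m - w (σ.symm m) * v m
        = (if m = j then w (σ.symm j) * ε else 0) - (if m = i then w (σ.symm i) * ε else 0) := by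
      intro m
      rcases eq_or_ne m i with rfl | hmi
      · simp [hv', hne, if_neg (Ne.symm hne)]; ring
      · rcases eq_or_ne m j with rfl | hmj
        · simp [hv', hmi]; ring
        · simp [hv', hmi, hmj]
    rw [Finset.sum_congr rfl (fun m _ => this m), Finset.sum_sub_distrib]
    simp [Finset.sum_ite_eq']
    ring
  -- difference against π = σ.trans (swap i j)
  have hΔ2 : GGF w v' - ∑ k, w k * v ((σ.trans (Equiv.swap i j)) k)
      = (v i - v j - ε) * (w (σ.symm i) - w (σ.symm j)) := by
    rw [hG', hS (σ.trans (Equiv.swap i j))]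
    have hsymm : ∀ m, (σ.trans (Equiv.swap i j)).symm m = σ.symm (Equiv.swap i j m) := by
      intro m; simp [Equiv.symm_trans_apply]
    calc ∑ m, w (σ.symm m) * v' m - ∑ m, w ((σ.trans (Equiv.swap i j)).symm m) * v m
        = ∑ m, (w (σ.symm m) * v' m - w (σ.symm (Equiv.swap i j m)) * v m) := by
          rw [← Finset.sum_sub_distrib]
          exact Finset.sum_congr rfl (fun m _ => by rw [hsymm])
      _ = ∑ m, (w (σ.symm m) * v' m - w (σ.symm m) * v (Equiv.swap i j m)) := by
          rw [Finset.sum_sub_distrib, Finset.sum_sub_distrib]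
          congr 1
          rw [← Equiv.sum_comp (Equiv.swap i j) (fun m => w (σ.symm m) * v (Equiv.swap i j m))]
          simp
      _ = (v i - v j - ε) * (w (σ.symm i) - w (σ.symm j)) := by
          have : ∀ m, w (σ.symm m) * v' m - w (σ.symm m) * v (Equiv.swap i j m)
              = (if m = i then w (σ.symm i) * (v i - ε - v j) else 0)
                + (if m = j then w (σ.symm j) * (v j + ε - v i) else 0) := by
            intro m
            rcases eq_or_ne m i with rfl | hmi
            · simp [hv', hne, if_neg (Ne.symm hne), Equiv.swap_apply_left]; ring
            · rcases eq_or_ne m j with rfl | hmj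
              · simp [hv', hmi, Equiv.swap_apply_right]; ring
              · simp [hv', hmi, hmj, Equiv.swap_apply_of_ne_of_ne hmi hmj]
          rw [Finset.sum_congr rfl (fun m _ => this m), Finset.sum_add_distrib]
          simp [Finset.sum_ite_eq']
          ring
  have hab : σ.symm i ≠ σ.symm j := fun h => hne (σ.symm.injective h)
  rcases lt_or_gt_of_ne (hw.injective.ne hab) with h | h
  · -- w (σ.symm i) < w (σ.symm j) : use Δ1
    have h1 : 0 < GGF w v' - ∑ k, w k * v (σ k) := by
      rw [hΔ1]; exact mul_pos hε0 (sub_pos.mpr h)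
    calc GGF w v ≤ ∑ k, w k * v (σ k) := key σ
      _ < GGF w v' := by linarith
  · -- w (σ.symm j) < w (σ.symm i) : use Δ2
    have h1 : 0 < GGF w v' - ∑ k, w k * v ((σ.trans (Equiv.swap i j)) k) := by
      rw [hΔ2]; exact mul_pos (by linarith) (sub_pos.mpr h)
    calc GGF w v ≤ ∑ k, w k * v ((σ.trans (Equiv.swap i j)) k) := key _
      _ < GGF w v' := by linarith
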